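/- (Counting of green nodes at depth 0.) Let l ≥ 2, let m, n ≥ 2l − 3, and set N = m + n − l. Then the number of Brauer representation triples γ for the pair (m,n) with ht(γ) ≤ N which possess at least one N-excluded ancestor equals Z_univ(l − 1). -/
import Mathlib


/-- A Brauer representation triple for the pair `(m, n)`: a natural number
`k ≤ min m n`, a partition `γ₊` of `m - k` and a partition `γ₋` of `n - k`. -/
structure BRT (m n : ℕ) where
  k : ℕ
  k_le : k ≤ min m n
  gp : Nat.Partition (m - k)
  gm : Nat.Partition (n - k)

namespace BRT

/-- The height of a Brauer representation triple: the total number of parts of the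
two partitions (the sum of the first-column lengths of the Young diagrams). -/
def ht {m n : ℕ} (γ : BRT m n) : ℕ :=
  Multiset.card γ.gp.parts + Multiset.card γ.gm.parts

end BRT

/-- `AddBox lam mu` : the multiset of parts `mu` is obtained from the multiset of parts
`lam` by adding one box to the Young diagram (either as a new part equal to `1`, or by
increasing one existing part by `1`). -/
def AddBox (lam mu : Multiset ℕ) : Prop :=
  mu = 1 ::ₘ lam ∨ ∃ a ∈ lam, mu = (a + 1) ::ₘ lam.erase a

/-- `γ'` (a triple at depth `d+1`) is a parent of `γ` (a triple at depth `d`):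
either (a) `k' = k`, `γ₊' = γ₊` and `γ₋` is obtained from `γ₋'` by adding one box, or
(b) `k' = k - 1`, `γ₋' = γ₋` and `γ₊'` is obtained from `γ₊` by adding one box. -/
def IsParent {m n₁ n₂ : ℕ} (γ : BRT m n₁) (γ' : BRT m n₂) : Prop :=
  (γ'.k = γ.k ∧ γ'.gp.parts = γ.gp.parts ∧ AddBox γ'.gm.parts γ.gm.parts)
  ∨ (γ'.k = γ.k - 1 ∧ γ'.gm.parts = γ.gm.parts ∧ AddBox γ.gp.parts γ'.gp.parts)

/-- `IsAncestor m n d d' γ γ'` : the triple `γ'` at depth `d'` for the pair `(m,n)` is an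
ancestor of the triple `γ` at depth `d`, i.e. `γ'` is reachable from `γ` by iterating
the parent relation `d' - d` times (one step for each unit increase of depth). -/
inductive IsAncestor (m n : ℕ) : ∀ (d d' : ℕ), BRT m (n - d) → BRT m (n - d') → Prop
  | step {d : ℕ} (γ : BRT m (n - d)) (γ' : BRT m (n - (d + 1))) :
      IsParent γ γ' → IsAncestor m n d (d + 1) γ γ'
  | tail {d d' : ℕ} {γ : BRT m (n - d)} {γ' : BRT m (n - d')} (γ'' : BRT m (n - (d' + 1))) :
      IsAncestor m n d d' γ γ' → IsParent γ' γ'' → IsAncestor m n d (d' + 1) γ γ''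

section Helpers

lemma card_le_sum' (s : Multiset ℕ) (h : ∀ x ∈ s, 0 < x) : Multiset.card s ≤ s.sum := by
  induction s using Multiset.induction with
  | empty => simp
  | cons a s ih =>
    simp only [Multiset.card_cons, Multiset.sum_cons]
    have := h a (Multiset.mem_cons_self a s)
    have := ih (fun x hx => h x (Multiset.mem_cons_of_mem hx))
    omega

lemma sum_map_succ (s : Multiset ℕ) : (s.map (· + 1)).sum = s.sum + Multiset.card s := by
  induction s using Multiset.induction with
  | empty => simp
  | cons a s ih => simp [ih]; ring

lemma sum_map_pred (s : Multiset ℕ) (h : ∀ x ∈ s, 0 < x) :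
    (s.map (· - 1)).sum + Multiset.card s = s.sum := by
  induction s using Multiset.induction with
  | empty => simp
  | cons a s ih =>
    have ha := h a (Multiset.mem_cons_self a s)
    have := ih (fun x hx => h x (Multiset.mem_cons_of_mem hx))
    simp only [Multiset.map_cons, Multiset.sum_cons, Multiset.card_cons]
    omega

lemma addBox_sum {lam mu : Multiset ℕ} (h : AddBox lam mu) : mu.sum = lam.sum + 1 := by
  rcases h with h | ⟨a, ha, h⟩
  · simp [h]; ring
  · subst h
    rw [Multiset.sum_cons]
    have hce := Multiset.cons_erase ha
    have : lam.sum = a + (lam.erase a).sum := by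
      conv_lhs => rw [← hce]
      simp
    omega

lemma addBox_card_le {lam mu : Multiset ℕ} (h : AddBox lam mu) :
    Multiset.card mu ≤ Multiset.card lam + 1 := by
  rcases h with h | ⟨a, ha, h⟩ <;> subst h <;> simp
  have h1 := Multiset.card_erase_of_mem ha
  have h2 : 0 < Multiset.card lam := Multiset.card_pos_iff_exists_mem.2 ⟨a, ha⟩
  rw [Nat.pred_eq_sub_one] at h1
  omega

lemma addBox_card_ge {lam mu : Multiset ℕ} (h : AddBox lam mu) :
    Multiset.card lam ≤ Multiset.card mu := by
  rcases h with h | ⟨a, ha, h⟩ <;> subst h <;> simp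
  have h1 := Multiset.card_erase_of_mem ha
  have h2 : 0 < Multiset.card lam := Multiset.card_pos_iff_exists_mem.2 ⟨a, ha⟩
  rw [Nat.pred_eq_sub_one] at h1
  omega

/-- first-column removal -/
def colShrink (s : Multiset ℕ) : Multiset ℕ := (s.filter (fun x => 1 < x)).map (· - 1)

lemma colShrink_pos {s : Multiset ℕ} {x : ℕ} (hx : x ∈ colShrink s) : 0 < x := by
  simp only [colShrink, Multiset.mem_map, Multiset.mem_filter] at hx
  obtain ⟨y, ⟨_, hy⟩, rfl⟩ := hx
  omega

lemma filter_not_eq_replicate (s : Multiset ℕ) (h : ∀ x ∈ s, 0 < x) :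
    s.filter (fun x => ¬ 1 < x)
      = Multiset.replicate (Multiset.card (s.filter (fun x => ¬ 1 < x))) 1 := by
  rw [Multiset.eq_replicate]
  refine ⟨rfl, fun b hb => ?_⟩
  rw [Multiset.mem_filter] at hb
  have := h b hb.1
  omega

lemma colShrink_sum {s : Multiset ℕ} (h : ∀ x ∈ s, 0 < x) :
    (colShrink s).sum + Multiset.card s = s.sum := by
  have hsplit := Multiset.filter_add_not (fun x => 1 < x) s
  have hfs : (colShrink s).sum + Multiset.card (s.filter (fun x => 1 < x))
      = (s.filter (fun x => 1 < x)).sum :=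
    sum_map_pred _ (fun x hx => by have := (Multiset.mem_filter.1 hx).2; omega)
  have hgsum : (s.filter (fun x => ¬ 1 < x)).sum
      = Multiset.card (s.filter (fun x => ¬ 1 < x)) := by
    conv_lhs => rw [filter_not_eq_replicate s h]
    simp [Multiset.sum_replicate]
  have h1 : (s.filter (fun x => 1 < x)).sum + (s.filter (fun x => ¬ 1 < x)).sum = s.sum := by
    rw [← Multiset.sum_add, hsplit]
  have h2 : Multiset.card (s.filter (fun x => 1 < x))
      + Multiset.card (s.filter (fun x => ¬ 1 < x)) = Multiset.card s := by
    rw [← Multiset.card_add, hsplit]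
  omega

lemma colShrink_card_le {s : Multiset ℕ} : Multiset.card (colShrink s) ≤ Multiset.card s := by
  simp only [colShrink, Multiset.card_map]
  exact Multiset.card_le_card (Multiset.filter_le _ s)

lemma colGrow_eq (s : Multiset ℕ) (h : ∀ x ∈ s, 0 < x) :
    (colShrink s).map (· + 1)
      + Multiset.replicate (Multiset.card s - Multiset.card (colShrink s)) 1 = s := by
  have hsplit := Multiset.filter_add_not (fun x => 1 < x) s
  have h1 : (colShrink s).map (· + 1) = s.filter (fun x => 1 < x) := by
    rw [colShrink, Multiset.map_map]
    have : ∀ x ∈ s.filter (fun x => 1 < x), ((· + 1) ∘ (· - 1)) x = id x := by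
      intro x hx
      have := (Multiset.mem_filter.1 hx).2
      simp only [Function.comp_apply, id]
      omega
    rw [Multiset.map_congr rfl this, Multiset.map_id]
  have h2 : Multiset.card s - Multiset.card (colShrink s)
      = Multiset.card (s.filter (fun x => ¬ 1 < x)) := by
    have hc : Multiset.card (s.filter (fun x => 1 < x))
        + Multiset.card (s.filter (fun x => ¬ 1 < x)) = Multiset.card s := by
      rw [← Multiset.card_add, hsplit]
    have : Multiset.card (colShrink s) = Multiset.card (s.filter (fun x => 1 < x)) := by
      simp [colShrink]
    omega
  rw [h1, h2, ← filter_not_eq_replicate s h, hsplit]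

lemma colShrink_colGrow (s : Multiset ℕ) (t : ℕ) (h : ∀ x ∈ s, 0 < x) :
    colShrink (s.map (· + 1) + Multiset.replicate t 1) = s := by
  rw [colShrink, Multiset.filter_add]
  have h1 : (s.map (· + 1)).filter (fun x => 1 < x) = s.map (· + 1) := by
    rw [Multiset.filter_eq_self]
    intro x hx
    obtain ⟨y, hy, rfl⟩ := Multiset.mem_map.1 hx
    have := h y hy
    omega
  have h2 : (Multiset.replicate t 1).filter (fun x => 1 < x) = 0 := by
    rw [Multiset.filter_eq_nil]
    intro x hx
    rw [Multiset.eq_of_mem_replicate hx]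
    omega
  rw [h1, h2, add_zero, Multiset.map_map]
  have : ∀ x ∈ s, ((· - 1) ∘ (· + 1)) x = id x := by intro x _; simp
  rw [Multiset.map_congr rfl this, Multiset.map_id]

lemma sigma_part_ext {x y : Σ a : ℕ, Nat.Partition a} (h : x.2.parts = y.2.parts) : x = y := by
  obtain ⟨a, pa⟩ := x
  obtain ⟨b, pb⟩ := y
  obtain rfl : a = b := by rw [← pa.parts_sum, ← pb.parts_sum]; exact congrArg Multiset.sum h
  exact congrArg (Sigma.mk a) (Nat.Partition.ext h)

lemma BRT.ext' {m n : ℕ} {γ γ' : BRT m n} (hk : γ.k = γ'.k)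
    (hp : γ.gp.parts = γ'.gp.parts) (hq : γ.gm.parts = γ'.gm.parts) : γ = γ' := by
  obtain ⟨k, hle, gp, gm⟩ := γ
  obtain ⟨k', hle', gp', gm'⟩ := γ'
  dsimp at hk hp hq
  subst hk
  congr 1
  · exact Nat.Partition.ext hp
  · exact Nat.Partition.ext hq

end Helpers


section Ancestors

lemma parent_bound {m n₁ n₂ : ℕ} {γ : BRT m n₁} {γ' : BRT m n₂} (h : IsParent γ γ') :
    γ'.ht + γ'.k ≤ γ.ht + γ.k := by
  rcases h with ⟨hk, hgp, hbox⟩ | ⟨hk, hgm, hbox⟩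
  · have h1 := addBox_card_ge hbox
    unfold BRT.ht
    rw [hgp]
    omega
  · have h1 := addBox_card_le hbox
    have h2 := addBox_sum hbox
    rw [γ.gp.parts_sum, γ'.gp.parts_sum] at h2
    have h3 : γ.k ≤ m := le_trans γ.k_le (min_le_left _ _)
    have h4 : γ'.k ≤ m := le_trans γ'.k_le (min_le_left _ _)
    unfold BRT.ht
    rw [hgm]
    omega

lemma ancestor_bound {m n : ℕ} {d d' : ℕ} {γ : BRT m (n - d)} {γ' : BRT m (n - d')}
    (h : IsAncestor m n d d' γ γ') : γ'.ht + γ'.k ≤ γ.ht + γ.k := by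
  induction h with
  | step _ _ hp => exact parent_bound hp
  | tail _ _ hp ih => exact le_trans (parent_bound hp) ih

def stepTriple {m n : ℕ} (γ : BRT m (n - 0)) (i : ℕ) (hi : i ≤ γ.k) : BRT m (n - i) where
  k := γ.k - i
  k_le := by
    have h1 := le_trans γ.k_le (min_le_left m (n - 0))
    have h2 := le_trans γ.k_le (min_le_right m (n - 0))
    exact le_min (by omega) (by omega)
  gp := { parts := Multiset.replicate i 1 + γ.gp.parts
          parts_pos := by
            intro x hx
            rcases Multiset.mem_add.1 hx with h | h
            · rw [Multiset.eq_of_mem_replicate h]; norm_num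
            · exact γ.gp.parts_pos h
          parts_sum := by
            have h := γ.gp.parts_sum
            have hkm := le_trans γ.k_le (min_le_left m (n - 0))
            rw [Multiset.sum_add, Multiset.sum_replicate, h]
            simp only [smul_eq_mul, mul_one]
            omega }
  gm := { parts := γ.gm.parts
          parts_pos := γ.gm.parts_pos
          parts_sum := by
            have h := γ.gm.parts_sum
            have hkn := le_trans γ.k_le (min_le_right m (n - 0))
            rw [h]
            omega }

lemma stepTriple_parent0 {m n : ℕ} (γ : BRT m (n - 0)) (h : 1 ≤ γ.k) :
    IsParent γ (stepTriple γ 1 h) := by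
  right
  refine ⟨rfl, rfl, Or.inl ?_⟩
  show Multiset.replicate 1 1 + γ.gp.parts = 1 ::ₘ γ.gp.parts
  rw [Multiset.replicate_one, Multiset.singleton_add]

lemma stepTriple_parent {m n : ℕ} (γ : BRT m (n - 0)) (j : ℕ) (hj : j + 1 ≤ γ.k) :
    IsParent (stepTriple γ j (by omega)) (stepTriple γ (j + 1) hj) := by
  right
  refine ⟨by simp only [stepTriple]; omega, rfl, Or.inl ?_⟩
  show Multiset.replicate (j + 1) 1 + γ.gp.parts
      = 1 ::ₘ (Multiset.replicate j 1 + γ.gp.parts)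
  rw [Multiset.replicate_succ, Multiset.cons_add]

lemma ancestor_exists {m n : ℕ} (γ : BRT m (n - 0)) :
    ∀ i, 1 ≤ i → ∀ hi : i ≤ γ.k, IsAncestor m n 0 i γ (stepTriple γ i hi)
  | 0, h, _ => absurd h (by omega)
  | 1, _, hi => IsAncestor.step _ _ (stepTriple_parent0 γ hi)
  | (j + 2), _, hi =>
      IsAncestor.tail _ (ancestor_exists γ (j + 1) (by omega) (by omega))
        (stepTriple_parent γ (j + 1) hi)

lemma stepTriple_ht {m n : ℕ} (γ : BRT m (n - 0)) (i : ℕ) (hi : i ≤ γ.k) :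
    (stepTriple γ i hi).ht = i + γ.ht := by
  simp [BRT.ht, stepTriple]
  omega

lemma char (m n l : ℕ) (γ : BRT m (n - 0)) :
    (γ.ht ≤ m + n - l ∧
      ∃ d' : ℕ, ∃ γ' : BRT m (n - d'),
        IsAncestor m n 0 d' γ γ' ∧ m + n - l < γ'.ht)
    ↔ (γ.ht ≤ m + n - l ∧ m + n - l < γ.ht + γ.k) := by
  constructor
  · rintro ⟨h1, d', γ', ha, h2⟩
    have := ancestor_bound ha
    exact ⟨h1, by omega⟩
  · rintro ⟨h1, h2⟩
    have hk : 1 ≤ γ.k := by omega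
    refine ⟨h1, γ.k, stepTriple γ γ.k le_rfl, ancestor_exists γ γ.k hk le_rfl, ?_⟩
    rw [stepTriple_ht]
    omega

end Ancestors


section Bijection

/-- ambient type of quadruples -/
abbrev Quad := (ℕ × ℕ) × (Σ a : ℕ, Nat.Partition a) × (Σ a : ℕ, Nat.Partition a)

def fwdQ (l : ℕ) {mm nn : ℕ} (k : ℕ) (gp : Nat.Partition mm) (gm : Nat.Partition nn) : Quad :=
  ((2 * k + (colShrink gp.parts).sum + (colShrink gm.parts).sum + 1 - l,
    l - k - (colShrink gp.parts).sum - (colShrink gm.parts).sum - 1),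
   ⟨(colShrink gp.parts).sum, ⟨colShrink gp.parts, fun hx => colShrink_pos hx, rfl⟩⟩,
   ⟨(colShrink gm.parts).sum, ⟨colShrink gm.parts, fun hx => colShrink_pos hx, rfl⟩⟩)

def bwd (m n l : ℕ) (hl : 2 ≤ l) (hm : 2 * l - 3 ≤ m) (hn : 2 * l - 3 ≤ n)
    (Δ j : ℕ) (P1 P2 : Σ a : ℕ, Nat.Partition a)
    (hq : 1 ≤ Δ) (hs : Δ + 2 * j + P1.1 + P2.1 = l - 1) : BRT m n where
  k := Δ + j
  k_le := le_min (by omega) (by omega)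
  gp := { parts := P1.2.parts.map (· + 1) +
            Multiset.replicate (m - (Δ + j) - P1.1 - Multiset.card P1.2.parts) 1
          parts_pos := by
            intro x hx
            rcases Multiset.mem_add.1 hx with h | h
            · obtain ⟨y, _, rfl⟩ := Multiset.mem_map.1 h; omega
            · rw [Multiset.eq_of_mem_replicate h]; norm_num
          parts_sum := by
            have hc := card_le_sum' P1.2.parts (fun x hx => P1.2.parts_pos hx)
            rw [P1.2.parts_sum] at hc
            rw [Multiset.sum_add, Multiset.sum_replicate, sum_map_succ, P1.2.parts_sum]
            simp only [smul_eq_mul, mul_one]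
            omega }
  gm := { parts := P2.2.parts.map (· + 1) +
            Multiset.replicate (n - (Δ + j) - P2.1 - Multiset.card P2.2.parts) 1
          parts_pos := by
            intro x hx
            rcases Multiset.mem_add.1 hx with h | h
            · obtain ⟨y, _, rfl⟩ := Multiset.mem_map.1 h; omega
            · rw [Multiset.eq_of_mem_replicate h]; norm_num
          parts_sum := by
            have hc := card_le_sum' P2.2.parts (fun x hx => P2.2.parts_pos hx)
            rw [P2.2.parts_sum] at hc
            rw [Multiset.sum_add, Multiset.sum_replicate, sum_map_succ, P2.2.parts_sum]
            simp only [smul_eq_mul, mul_one]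
            omega }

lemma bwd_gp_card (m n l : ℕ) (hl : 2 ≤ l) (hm : 2 * l - 3 ≤ m) (hn : 2 * l - 3 ≤ n)
    (Δ j : ℕ) (P1 P2 : Σ a : ℕ, Nat.Partition a)
    (hq : 1 ≤ Δ) (hs : Δ + 2 * j + P1.1 + P2.1 = l - 1) :
    Multiset.card (bwd m n l hl hm hn Δ j P1 P2 hq hs).gp.parts = m - (Δ + j) - P1.1 := by
  have hc := card_le_sum' P1.2.parts (fun x hx => P1.2.parts_pos hx)
  rw [P1.2.parts_sum] at hc
  simp only [bwd, Multiset.card_add, Multiset.card_map, Multiset.card_replicate]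
  omega

lemma bwd_gm_card (m n l : ℕ) (hl : 2 ≤ l) (hm : 2 * l - 3 ≤ m) (hn : 2 * l - 3 ≤ n)
    (Δ j : ℕ) (P1 P2 : Σ a : ℕ, Nat.Partition a)
    (hq : 1 ≤ Δ) (hs : Δ + 2 * j + P1.1 + P2.1 = l - 1) :
    Multiset.card (bwd m n l hl hm hn Δ j P1 P2 hq hs).gm.parts = n - (Δ + j) - P2.1 := by
  have hc := card_le_sum' P2.2.parts (fun x hx => P2.2.parts_pos hx)
  rw [P2.2.parts_sum] at hc
  simp only [bwd, Multiset.card_add, Multiset.card_map, Multiset.card_replicate]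
  omega

end Bijection


section Main

noncomputable def mainEquiv (m n l : ℕ) (hl : 2 ≤ l) (hm : 2 * l - 3 ≤ m)
    (hn : 2 * l - 3 ≤ n) :
    {γ : BRT m (n - 0) // γ.ht ≤ m + n - l ∧ m + n - l < γ.ht + γ.k}
      ≃ {q : Quad // 1 ≤ q.1.1 ∧ q.1.1 + 2 * q.1.2 + q.2.1.1 + q.2.2.1 = l - 1} where
  toFun γ := ⟨fwdQ l γ.1.k γ.1.gp γ.1.gm, by
    obtain ⟨γ, h1, h2⟩ := γ
    have ha := colShrink_sum (fun x hx => γ.gp.parts_pos hx)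
    have hb := colShrink_sum (fun x hx => γ.gm.parts_pos hx)
    rw [γ.gp.parts_sum] at ha
    rw [γ.gm.parts_sum] at hb
    have hk1 := le_trans γ.k_le (min_le_left m (n - 0))
    have hk2 := le_trans γ.k_le (min_le_right m (n - 0))
    unfold BRT.ht at h1 h2
    constructor <;> (simp only [fwdQ]; omega)⟩
  invFun q := ⟨bwd m n l hl hm hn q.1.1.1 q.1.1.2 q.1.2.1 q.1.2.2 q.2.1 q.2.2, by
    obtain ⟨⟨⟨Δ, j⟩, P1, P2⟩, hq, hs⟩ := q
    dsimp only at hq hs ⊢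
    unfold BRT.ht
    rw [bwd_gp_card m n l hl hm hn Δ j P1 P2 hq hs,
        bwd_gm_card m n l hl hm hn Δ j P1 P2 hq hs]
    have hk : (bwd m n l hl hm hn Δ j P1 P2 hq hs).k = Δ + j := rfl
    rw [hk]
    constructor <;> omega⟩
  left_inv := by
    rintro ⟨γ, h1, h2⟩
    apply Subtype.ext
    dsimp only
    have hpos1 : ∀ x ∈ γ.gp.parts, 0 < x := fun x hx => γ.gp.parts_pos hx
    have hpos2 : ∀ x ∈ γ.gm.parts, 0 < x := fun x hx => γ.gm.parts_pos hx
    have ha := colShrink_sum hpos1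
    have hb := colShrink_sum hpos2
    rw [γ.gp.parts_sum] at ha
    rw [γ.gm.parts_sum] at hb
    have hk1 := le_trans γ.k_le (min_le_left m (n - 0))
    have hk2 := le_trans γ.k_le (min_le_right m (n - 0))
    unfold BRT.ht at h1 h2
    have hcle1 := colShrink_card_le (s := γ.gp.parts)
    have hcle2 := colShrink_card_le (s := γ.gm.parts)
    apply BRT.ext'
    · simp only [fwdQ, bwd]
      omega
    · simp only [fwdQ, bwd]
      have e : m - (2 * γ.k + (colShrink γ.gp.parts).sum + (colShrink γ.gm.parts).sum + 1 - l
            + (l - γ.k - (colShrink γ.gp.parts).sum - (colShrink γ.gm.parts).sum - 1))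
            - (colShrink γ.gp.parts).sum - Multiset.card (colShrink γ.gp.parts)
          = Multiset.card γ.gp.parts - Multiset.card (colShrink γ.gp.parts) := by omega
      rw [e]
      exact colGrow_eq _ hpos1
    · simp only [fwdQ, bwd]
      have e : n - (2 * γ.k + (colShrink γ.gp.parts).sum + (colShrink γ.gm.parts).sum + 1 - l
            + (l - γ.k - (colShrink γ.gp.parts).sum - (colShrink γ.gm.parts).sum - 1))
            - (colShrink γ.gm.parts).sum - Multiset.card (colShrink γ.gm.parts)
          = Multiset.card γ.gm.parts - Multiset.card (colShrink γ.gm.parts) := by omega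
      rw [e]
      exact colGrow_eq _ hpos2
  right_inv := by
    rintro ⟨⟨⟨Δ, j⟩, P1, P2⟩, hq, hs⟩
    apply Subtype.ext
    dsimp only at hq hs ⊢
    have hgp : colShrink (bwd m n l hl hm hn Δ j P1 P2 hq hs).gp.parts = P1.2.parts := by
      simp only [bwd]
      exact colShrink_colGrow _ _ (fun x hx => P1.2.parts_pos hx)
    have hgm : colShrink (bwd m n l hl hm hn Δ j P1 P2 hq hs).gm.parts = P2.2.parts := by
      simp only [bwd]
      exact colShrink_colGrow _ _ (fun x hx => P2.2.parts_pos hx)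
    have hgps : (colShrink (bwd m n l hl hm hn Δ j P1 P2 hq hs).gp.parts).sum = P1.1 := by
      rw [hgp, P1.2.parts_sum]
    have hgms : (colShrink (bwd m n l hl hm hn Δ j P1 P2 hq hs).gm.parts).sum = P2.1 := by
      rw [hgm, P2.2.parts_sum]
    have hk : (bwd m n l hl hm hn Δ j P1 P2 hq hs).k = Δ + j := rfl
    unfold fwdQ
    refine Prod.ext (Prod.ext ?_ ?_) (Prod.ext ?_ ?_)
    · dsimp only
      rw [hgps, hgms, hk]
      omega
    · dsimp only
      rw [hgps, hgms, hk]
      omega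
    · exact sigma_part_ext hgp
    · exact sigma_part_ext hgm

end Main


/-- `Zuniv s` : the number of quadruples `(Δ, k, λ₁, λ₂)` with `Δ ≥ 1`, `k ≥ 0` natural
numbers and `λ₁, λ₂` partitions (of arbitrary natural numbers) such that
`Δ + 2k + |λ₁| + |λ₂| = s`. -/
noncomputable def Zuniv (s : ℕ) : ℕ :=
  Nat.card {q : (ℕ × ℕ) × (Σ a : ℕ, Nat.Partition a) × (Σ a : ℕ, Nat.Partition a) //
    1 ≤ q.1.1 ∧ q.1.1 + 2 * q.1.2 + q.2.1.1 + q.2.2.1 = s}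

/-- `p a` : the number of partitions of `a` (with `p 0 = 1`). -/
def p (a : ℕ) : ℕ := Fintype.card (Nat.Partition a)

/-- Counting of green nodes at depth `0`: for `l ≥ 2`, `m, n ≥ 2l - 3` and
`N = m + n - l`, the number of Brauer representation triples `γ` for the pair `(m,n)`
with `ht(γ) ≤ N` which possess at least one `N`-excluded ancestor equals
`Z_univ(l - 1)`. -/
theorem stmt14 (m n l : ℕ) (hl : 2 ≤ l) (hm : 2 * l - 3 ≤ m) (hn : 2 * l - 3 ≤ n) :
    Nat.card {γ : BRT m (n - 0) //
        γ.ht ≤ m + n - l ∧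
        ∃ d' : ℕ, ∃ γ' : BRT m (n - d'),
          IsAncestor m n 0 d' γ γ' ∧ m + n - l < γ'.ht}
      = Zuniv (l - 1) :=
  Nat.card_congr ((Equiv.subtypeEquivRight (fun γ => char m n l γ)).trans
    (mainEquiv m n l hl hm hn))
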